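/- In the discrete Cucker–Smale model, if f(y) < 1/s for all y ≥ 0 and M_v < (s/(3h)) ∫_{M_x}^∞ f(y) dy, then all velocities converge to a common limit, and there exists R ≥ 0 such that ‖X_i(n) − X_j(n)‖ ≤ R for all i, j and all n ≥ 0. -/

import Mathlib

open Filter

lemma le_iSup₂_fin {ι : Type*} [Fintype ι] (g : ι → ι → ℝ) (i j : ι) :
    g i j ≤ ⨆ i, ⨆ j, g i j := by
  haveI : Nonempty ι := ⟨i⟩
  refine le_trans (le_ciSup (Set.finite_range (g i)).bddAbove j) ?_
  exact le_ciSup (Set.finite_range fun i => ⨆ j, g i j).bddAbove i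

lemma iSup₂_le_fin {ι : Type*} [Fintype ι] [Nonempty ι] {g : ι → ι → ℝ} {B : ℝ}
    (hB : ∀ i j, g i j ≤ B) : (⨆ i, ⨆ j, g i j) ≤ B :=
  ciSup_le fun i => ciSup_le (hB i)

lemma cs_contraction {E : Type*} [NormedAddCommGroup E] [NormedSpace ℝ E]
    {s : ℕ} (u : Fin s → E) (a b : Fin s → ℝ) (μ D : ℝ)
    (ha : ∀ j, μ ≤ a j) (hb : ∀ j, μ ≤ b j)
    (hsa : ∑ j, a j = 1) (hsb : ∑ j, b j = 1)
    (hD : ∀ j k, ‖u j - u k‖ ≤ D) (hD0 : 0 ≤ D) :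
    ‖(∑ j, a j • u j) - ∑ j, b j • u j‖ ≤ (1 - s * μ) * D := by
  classical
  set c : Fin s → ℝ := fun j => min (a j) (b j) with hc
  set p : Fin s → ℝ := fun j => a j - c j with hp
  set q : Fin s → ℝ := fun j => b j - c j with hq
  have hp0 : ∀ j, 0 ≤ p j := fun j => sub_nonneg.2 (min_le_left _ _)
  have hq0 : ∀ j, 0 ≤ q j := fun j => sub_nonneg.2 (min_le_right _ _)
  set T : ℝ := ∑ j, p j with hT
  have hTq : ∑ j, q j = T := by
    simp only [hT, hp, hq, Finset.sum_sub_distrib, hsa, hsb]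
  have hT0 : 0 ≤ T := Finset.sum_nonneg fun j _ => hp0 j
  have hcμ : ∀ j, μ ≤ c j := fun j => le_min (ha j) (hb j)
  have hTle : T ≤ 1 - s * μ := by
    have h1 : (s : ℝ) * μ ≤ ∑ j : Fin s, c j := by
      calc (s : ℝ) * μ = ∑ _j : Fin s, μ := by simp [mul_comm]
      _ ≤ ∑ j, c j := Finset.sum_le_sum fun j _ => hcμ j
    have hTc : T = 1 - ∑ j, c j := by
      simp only [hT, hp, Finset.sum_sub_distrib, hsa]
    linarith
  have hdiff : (∑ j, a j • u j) - ∑ j, b j • u j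
      = (∑ j, p j • u j) - ∑ j, q j • u j := by
    simp only [hp, hq, sub_smul, Finset.sum_sub_distrib]
    abel
  have h1 : T • ∑ j, p j • u j = ∑ j, ∑ k, (p j * q k) • u j := by
    rw [Finset.smul_sum]
    refine Finset.sum_congr rfl fun j _ => ?_
    rw [← Finset.sum_smul, ← Finset.mul_sum, hTq, smul_smul, mul_comm]
  have h2 : T • ∑ k, q k • u k = ∑ j, ∑ k, (p j * q k) • u k := by
    rw [Finset.sum_comm, Finset.smul_sum]
    refine Finset.sum_congr rfl fun k _ => ?_
    rw [← Finset.sum_smul, ← Finset.sum_mul, smul_smul]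
  have hkey : T • ((∑ j, p j • u j) - ∑ j, q j • u j)
      = ∑ j, ∑ k, (p j * q k) • (u j - u k) := by
    rw [smul_sub, h1, h2, ← Finset.sum_sub_distrib]
    refine Finset.sum_congr rfl fun j _ => ?_
    rw [← Finset.sum_sub_distrib]
    exact Finset.sum_congr rfl fun k _ => (smul_sub _ _ _).symm
  have hnorm : ‖∑ j : Fin s, ∑ k : Fin s, (p j * q k) • (u j - u k)‖ ≤ T * T * D := by
    calc ‖∑ j : Fin s, ∑ k : Fin s, (p j * q k) • (u j - u k)‖
        ≤ ∑ j : Fin s, ‖∑ k : Fin s, (p j * q k) • (u j - u k)‖ := norm_sum_le _ _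
      _ ≤ ∑ j : Fin s, ∑ k : Fin s, ‖(p j * q k) • (u j - u k)‖ :=
          Finset.sum_le_sum fun j _ => norm_sum_le _ _
      _ ≤ ∑ j : Fin s, ∑ k : Fin s, p j * q k * D := by
          refine Finset.sum_le_sum fun j _ => Finset.sum_le_sum fun k _ => ?_
          rw [norm_smul, Real.norm_of_nonneg (mul_nonneg (hp0 j) (hq0 k))]
          exact mul_le_mul_of_nonneg_left (hD j k) (mul_nonneg (hp0 j) (hq0 k))
      _ = T * T * D := by
          have : ∀ j, ∑ k : Fin s, p j * q k * D = p j * (T * D) := by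
            intro j
            rw [← Finset.sum_mul, ← Finset.mul_sum, hTq, mul_assoc]
          rw [Finset.sum_congr rfl fun j _ => this j, ← Finset.sum_mul, ← hT]
          ring
  rw [hdiff]
  rcases eq_or_lt_of_le hT0 with hT0' | hT0'
  · have hp' : ∀ j ∈ Finset.univ, p j = 0 :=
      (Finset.sum_eq_zero_iff_of_nonneg (fun j _ => hp0 j)).1 hT0'.symm
    have hq' : ∀ j ∈ Finset.univ, q j = 0 :=
      (Finset.sum_eq_zero_iff_of_nonneg (fun j _ => hq0 j)).1 (hTq.trans hT0'.symm)
    have hz : (∑ j, p j • u j) - ∑ j, q j • u j = 0 := by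
      rw [Finset.sum_eq_zero fun j hj => by rw [hp' j hj, zero_smul],
        Finset.sum_eq_zero fun j hj => by rw [hq' j hj, zero_smul], sub_zero]
    rw [hz, norm_zero]
    exact mul_nonneg (by linarith) hD0
  · have hb1 : ‖T • ((∑ j, p j • u j) - ∑ j, q j • u j)‖ ≤ T * T * D := by
      rw [hkey]; exact hnorm
    rw [norm_smul, Real.norm_of_nonneg hT0] at hb1
    rw [mul_assoc] at hb1
    have hb2 : ‖(∑ j, p j • u j) - ∑ j, q j • u j‖ ≤ T * D :=
      (mul_le_mul_iff_right₀ hT0').1 hb1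
    exact hb2.trans (mul_le_mul_of_nonneg_right hTle hD0)

set_option maxHeartbeats 1000000

/-- Cucker–Smale consensus theorem: if f(y) < 1/s for all y ≥ 0 and
M_v < (s/(3h)) ∫_{M_x}^∞ f, then all velocities converge to a common limit
and all pairwise distances remain bounded. -/

theorem cuckerSmale_consensus {s : ℕ} (hs : 0 < s)
    (X V : ℕ → Fin s → EuclideanSpace ℝ (Fin 3)) (h : ℝ) (hh : 0 < h)
    (f : ℝ → ℝ) (hf_nonneg : ∀ y, 0 ≤ y → 0 ≤ f y)
    (hf_anti : ∀ x y, 0 ≤ x → x ≤ y → f y ≤ f x)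
    (hf_lt : ∀ y, 0 ≤ y → f y < 1 / s)
    (hX : ∀ n i, X (n+1) i = X n i + h • V n i)
    (hV : ∀ n i, V (n+1) i = V n i +
      ∑ j ∈ Finset.univ.erase i, f ‖X n i - X n j‖ • (V n j - V n i))
    (Mx Mv : ℝ)
    (hMx : Mx = ⨆ i, ⨆ j, ‖X 0 i - X 0 j‖)
    (hMv : Mv = ⨆ i, ⨆ j, ‖V 0 i - V 0 j‖)
    (hinit : Mv < ((s : ℝ) / (3 * h)) * ∫ y in Set.Ioi Mx, f y) :
    (∃ c : EuclideanSpace ℝ (Fin 3),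
      ∀ i, Tendsto (fun n => V n i) atTop (nhds c)) ∧
    (∃ R : ℝ, 0 ≤ R ∧ ∀ n (i j : Fin s), ‖X n i - X n j‖ ≤ R) := by
  classical
  haveI : Nonempty (Fin s) := Fin.pos_iff_nonempty.mp hs
  obtain ⟨i0⟩ : Nonempty (Fin s) := inferInstance
  have hs' : (0 : ℝ) < s := by exact_mod_cast hs
  set Dx : ℕ → ℝ := fun n => ⨆ i, ⨆ j, ‖X n i - X n j‖ with hDxdef
  set Dv : ℕ → ℝ := fun n => ⨆ i, ⨆ j, ‖V n i - V n j‖ with hDvdef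
  have hDxle : ∀ n i j, ‖X n i - X n j‖ ≤ Dx n := fun n => le_iSup₂_fin _
  have hDvle : ∀ n i j, ‖V n i - V n j‖ ≤ Dv n := fun n => le_iSup₂_fin _
  have hDx0 : ∀ n, 0 ≤ Dx n := fun n => by simpa using hDxle n i0 i0
  have hDv0 : ∀ n, 0 ≤ Dv n := fun n => by simpa using hDvle n i0 i0
  have hDxMx : Dx 0 = Mx := hMx.symm
  have hDvMv : Dv 0 = Mv := hMv.symm
  have hMx0 : 0 ≤ Mx := hDxMx ▸ hDx0 0
  have hMv0 : 0 ≤ Mv := hDvMv ▸ hDv0 0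
  -- integrability on compact intervals
  have hint : ∀ a b : ℝ, 0 ≤ a → 0 ≤ b → IntervalIntegrable f MeasureTheory.volume a b := by
    intro a b ha hb
    apply AntitoneOn.intervalIntegrable
    intro x hx y hy hxy
    rw [Set.uIcc_eq_union] at hx
    have hx0 : 0 ≤ x := by
      rcases hx with hx | hx
      · exact le_trans ha hx.1
      · exact le_trans hb hx.1
    exact hf_anti x y hx0 hxy
  have hIint : MeasureTheory.IntegrableOn f (Set.Ioi Mx) := by
    by_contra hcon
    rw [MeasureTheory.integral_undef hcon, mul_zero] at hinit
    linarith
  set I : ℝ := ∫ y in Set.Ioi Mx, f y with hIdef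
  have hsh : (0 : ℝ) < (s : ℝ) / (3 * h) := by positivity
  have hIpos : 0 < I := by
    by_contra hcon
    push_neg at hcon
    nlinarith
  set F : ℝ → ℝ := fun x => ∫ y in Mx..x, f y with hFdef
  have hFadd : ∀ a b : ℝ, 0 ≤ a → 0 ≤ b → F b = F a + ∫ y in a..b, f y := by
    intro a b ha hb
    rw [hFdef]
    exact (intervalIntegral.integral_add_adjacent_intervals
      (hint Mx a hMx0 ha) (hint a b ha hb)).symm
  have hFbound : ∀ a b : ℝ, 0 ≤ a → 0 ≤ b → (∫ y in a..b, f y) ≤ f a * (b - a) := by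
    intro a b ha hb
    rcases le_total a b with hab | hab
    · calc (∫ y in a..b, f y) ≤ ∫ _y in a..b, f a := by
            apply intervalIntegral.integral_mono_on hab (hint a b ha hb)
              intervalIntegrable_const
            intro x hx
            exact hf_anti a x ha hx.1
        _ = f a * (b - a) := by rw [intervalIntegral.integral_const, smul_eq_mul, mul_comm]
    · have h1 : f a * (a - b) ≤ ∫ y in b..a, f y := by
        calc f a * (a - b) = ∫ _y in b..a, f a := by
              rw [intervalIntegral.integral_const, smul_eq_mul, mul_comm]
          _ ≤ ∫ y in b..a, f y := by
              apply intervalIntegral.integral_mono_on hab intervalIntegrable_const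
                (hint b a hb ha)
              intro x hx
              exact hf_anti x a (le_trans hb hx.1) hx.2
      rw [intervalIntegral.integral_symm]
      linarith
  have hFmono : ∀ x y : ℝ, 0 ≤ x → x ≤ y → F x ≤ F y := by
    intro x y hx hxy
    rw [hFadd x y hx (le_trans hx hxy)]
    have : 0 ≤ ∫ u in x..y, f u :=
      intervalIntegral.integral_nonneg hxy fun u hu => hf_nonneg u (le_trans hx hu.1)
    linarith
  -- matrix representation of velocity update
  set A : ℕ → Fin s → Fin s → ℝ := fun n i j =>
    if j = i then 1 - ∑ k ∈ Finset.univ.erase i, f ‖X n i - X n k‖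
    else f ‖X n i - X n j‖ with hAdef
  have hAerase : ∀ n i, ∀ j ∈ Finset.univ.erase i, A n i j = f ‖X n i - X n j‖ := by
    intro n i j hj
    rw [hAdef]
    simp [Finset.ne_of_mem_erase hj]
  have hArow : ∀ n i, ∑ j, A n i j = 1 := by
    intro n i
    rw [← Finset.sum_erase_add _ _ (Finset.mem_univ i),
      Finset.sum_congr rfl (hAerase n i)]
    simp [hAdef]
  have hVmat : ∀ n i, V (n+1) i = ∑ j, A n i j • V n j := by
    intro n i
    rw [← Finset.sum_erase_add _ _ (Finset.mem_univ i),
      Finset.sum_congr rfl fun j hj => by rw [hAerase n i j hj]]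
    have hAi : A n i i = 1 - ∑ k ∈ Finset.univ.erase i, f ‖X n i - X n k‖ := by
      rw [hAdef]; simp
    rw [hV n i, hAi, sub_smul, one_smul]
    simp only [smul_sub, Finset.sum_sub_distrib, Finset.sum_smul]
    abel
  have hAbound : ∀ n i j, f (Dx n) ≤ A n i j := by
    intro n i j
    have hfd : f (Dx n) < 1 / s := hf_lt _ (hDx0 n)
    by_cases hji : j = i
    · simp only [hAdef, if_pos hji]
      have hcard : ((Finset.univ.erase i).card : ℝ) = (s : ℝ) - 1 := by
        rw [Finset.card_erase_of_mem (Finset.mem_univ i)]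
        simp [Nat.cast_sub hs]
      have hsum : ∑ k ∈ Finset.univ.erase i, f ‖X n i - X n k‖
          ≤ ((Finset.univ.erase i).card : ℝ) * (1 / s) := by
        rw [← nsmul_eq_mul]
        exact Finset.sum_le_card_nsmul _ _ _ fun k _ => (hf_lt _ (norm_nonneg _)).le
      rw [hcard] at hsum
      have : ((s : ℝ) - 1) * (1 / s) = 1 - 1 / s := by field_simp
      linarith
    · simp only [hAdef, if_neg hji]
      exact hf_anti _ _ (norm_nonneg _) (hDxle n i j)
  have hkey : ∀ n, Dv (n+1) ≤ (1 - s * f (Dx n)) * Dv n := by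
    intro n
    apply iSup₂_le_fin
    intro i j
    rw [hVmat n i, hVmat n j]
    exact cs_contraction (V n) (A n i) (A n j) (f (Dx n)) (Dv n)
      (hAbound n i) (hAbound n j) (hArow n i) (hArow n j) (hDvle n) (hDv0 n)
  have hXstep : ∀ n, Dx (n+1) ≤ Dx n + h * Dv n := by
    intro n
    apply iSup₂_le_fin
    intro i j
    have he : X (n+1) i - X (n+1) j = (X n i - X n j) + h • (V n i - V n j) := by
      rw [hX n i, hX n j, smul_sub]; abel
    rw [he]
    calc ‖(X n i - X n j) + h • (V n i - V n j)‖
        ≤ ‖X n i - X n j‖ + ‖h • (V n i - V n j)‖ := norm_add_le _ _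
      _ ≤ Dx n + h * Dv n := by
          rw [norm_smul, Real.norm_of_nonneg hh.le]
          exact add_le_add (hDxle n i j)
            (mul_le_mul_of_nonneg_left (hDvle n i j) hh.le)
  -- Lyapunov functional
  have hE : ∀ n, Dv n + ((s : ℝ) / h) * F (Dx n) ≤ Mv := by
    intro n
    induction n with
    | zero =>
      rw [hDxMx, hDvMv, hFdef]
      simp
    | succ n ih =>
      have ha := hkey n
      have hb := hXstep n
      have hc : F (Dx (n+1)) ≤ F (Dx n) + f (Dx n) * (h * Dv n) := by
        rw [hFadd (Dx n) (Dx (n+1)) (hDx0 n) (hDx0 (n+1))]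
        have h1 := hFbound (Dx n) (Dx (n+1)) (hDx0 n) (hDx0 (n+1))
        have h2 : f (Dx n) * (Dx (n+1) - Dx n) ≤ f (Dx n) * (h * Dv n) :=
          mul_le_mul_of_nonneg_left (by linarith) (hf_nonneg _ (hDx0 n))
        linarith
      have hd : ((s : ℝ) / h) * F (Dx (n+1))
          ≤ ((s : ℝ) / h) * (F (Dx n) + f (Dx n) * (h * Dv n)) :=
        mul_le_mul_of_nonneg_left hc (by positivity)
      have he : ((s : ℝ) / h) * (f (Dx n) * (h * Dv n)) = s * f (Dx n) * Dv n := by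
        field_simp
      nlinarith [hd, ha, ih]
  have hFS : ∀ n, F (Dx n) ≤ h / s * Mv := by
    intro n
    have h1 := hE n
    have h2 : ((s : ℝ) / h) * F (Dx n) ≤ Mv := by linarith [hDv0 n]
    have h3 : (h / s) * (((s : ℝ) / h) * F (Dx n)) = F (Dx n) := by
      field_simp
    nlinarith [mul_le_mul_of_nonneg_left h2 (show (0:ℝ) ≤ h / s by positivity)]
  have hSI : h / s * Mv < I := by
    have h1 : (h / s) * ((s : ℝ) / (3 * h)) = 1 / 3 := by field_simp
    nlinarith [mul_lt_mul_of_pos_left hinit (show (0:ℝ) < h / s by positivity)]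
  -- find R with F R > h/s*Mv and f R > 0
  obtain ⟨R, hR0, hFR, hfR⟩ : ∃ R : ℝ, 0 ≤ R ∧ h / s * Mv < F R ∧ 0 < f R := by
    have htend : Tendsto F atTop (nhds I) := by
      have := MeasureTheory.intervalIntegral_tendsto_integral_Ioi Mx hIint
        (tendsto_id (α := ℝ))
      exact this
    by_cases hfz : ∃ z, 0 ≤ z ∧ f z = 0
    · obtain ⟨z, hz0, hz⟩ := hfz
      set Z : Set ℝ := {y : ℝ | 0 ≤ y ∧ f y = 0} with hZdef
      have hZne : Z.Nonempty := ⟨z, hz0, hz⟩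
      have hZbd : BddBelow Z := ⟨0, fun y hy => hy.1⟩
      set z0 := sInf Z with hz0def
      have hz0nn : 0 ≤ z0 := le_csInf hZne fun y hy => hy.1
      have hfzero : ∀ y, z0 < y → f y = 0 := by
        intro y hy
        obtain ⟨w, hwZ, hw⟩ := exists_lt_of_csInf_lt hZne hy
        exact le_antisymm (hwZ.2 ▸ hf_anti w y hwZ.1 hw.le)
          (hf_nonneg y (le_trans hwZ.1 hw.le))
      have hMxz0 : Mx < z0 := by
        by_contra hcon
        push_neg at hcon
        have hI0 : I = 0 := by
          rw [hIdef]
        -- integral of zero function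
          rw [MeasureTheory.setIntegral_congr_fun measurableSet_Ioi
            (g := fun _ => (0:ℝ)) fun y hy => hfzero y (lt_of_le_of_lt hcon hy)]
          simp
        linarith
      have hIF : I = F z0 := by
        have hsplit : I = (∫ y in Set.Ioc Mx z0, f y) + ∫ y in Set.Ioi z0, f y := by
          rw [hIdef, ← MeasureTheory.setIntegral_union
            (Set.Ioc_disjoint_Ioi le_rfl) measurableSet_Ioi
            (hIint.mono_set (Set.Ioc_subset_Ioi_self))
            (hIint.mono_set (Set.Ioi_subset_Ioi hMxz0.le)),
            Set.Ioc_union_Ioi_eq_Ioi hMxz0.le]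
        have h2 : (∫ y in Set.Ioi z0, f y) = 0 := by
          rw [MeasureTheory.setIntegral_congr_fun measurableSet_Ioi
            (g := fun _ => (0:ℝ)) fun y hy => hfzero y hy]
          simp
        have h3 : F z0 = ∫ y in Set.Ioc Mx z0, f y :=
          intervalIntegral.integral_of_le hMxz0.le
        linarith
      set ε : ℝ := min ((z0 - Mx) / 2) ((I - h / s * Mv) * s / 2) with hεdef
      have hε0 : 0 < ε := by
        have hpos2 : (0:ℝ) < (I - h / s * Mv) * s / 2 := by
          have h9 : (0:ℝ) < I - h / s * Mv := by linarith
          have := mul_pos h9 hs'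
          linarith
        exact lt_min (by linarith) hpos2
      refine ⟨z0 - ε, ?_, ?_, ?_⟩
      · have : ε ≤ (z0 - Mx) / 2 := min_le_left _ _
        linarith
      · have hεle : ε ≤ (I - h / s * Mv) * s / 2 := min_le_right _ _
        have hR0' : (0:ℝ) ≤ z0 - ε := by
          have : ε ≤ (z0 - Mx) / 2 := min_le_left _ _
          linarith
        have hsplit2 : F z0 = F (z0 - ε) + ∫ y in (z0 - ε)..z0, f y :=
          hFadd (z0 - ε) z0 hR0' hz0nn
        have hbd : (∫ y in (z0 - ε)..z0, f y) ≤ f (z0 - ε) * (z0 - (z0 - ε)) :=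
          hFbound (z0 - ε) z0 hR0' hz0nn
        have hflt : f (z0 - ε) < 1 / s := hf_lt _ hR0'
        have h4 : f (z0 - ε) * (z0 - (z0 - ε)) ≤ 1 / s * ε := by
          have : z0 - (z0 - ε) = ε := by ring
          rw [this]
          exact mul_le_mul_of_nonneg_right hflt.le hε0.le
        have h5 : 1 / s * ε ≤ (I - h / s * Mv) / 2 := by
          have h6 : 1 / s * ((I - h / s * Mv) * s / 2) = (I - h / s * Mv) / 2 := by
            field_simp
          nlinarith [mul_le_mul_of_nonneg_left hεle (show (0:ℝ) ≤ 1/s by positivity)]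
        have h7 : F (z0 - ε) ≥ I - (I - h / s * Mv) / 2 := by
          rw [hIF]
          linarith
        linarith
      · have hR0' : (0:ℝ) ≤ z0 - ε := by
          have : ε ≤ (z0 - Mx) / 2 := min_le_left _ _
          linarith
        rcases lt_or_eq_of_le (hf_nonneg _ hR0') with hpos | heq
        · exact hpos
        · exfalso
          have : z0 ≤ z0 - ε := csInf_le hZbd ⟨hR0', heq.symm⟩
          linarith
    · push_neg at hfz
      have hev : ∀ᶠ x in atTop, h / s * Mv < F x := htend.eventually (eventually_gt_nhds hSI)
      obtain ⟨R, hFR, hR0⟩ := (hev.and (eventually_ge_atTop (0:ℝ))).exists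
      exact ⟨R, hR0, hFR, lt_of_le_of_ne (hf_nonneg R hR0) (Ne.symm (hfz R hR0))⟩
  have hDxR : ∀ n, Dx n ≤ R := by
    intro n
    by_contra hcon
    push_neg at hcon
    exact absurd (hFS n) (not_le.2 (lt_of_lt_of_le hFR (hFmono R (Dx n) hR0 hcon.le)))
  set r : ℝ := 1 - s * f R with hrdef
  have hr0 : 0 ≤ r := by
    have := hf_lt R hR0
    have h1 : (s : ℝ) * f R < s * (1 / s) := mul_lt_mul_of_pos_left this hs'
    have h2 : (s : ℝ) * (1 / s) = 1 := by field_simp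
    rw [hrdef]; linarith
  have hr1 : r < 1 := by
    have : 0 < (s : ℝ) * f R := mul_pos hs' hfR
    rw [hrdef]; linarith
  have hgeo : ∀ n, Dv n ≤ Mv * r ^ n := by
    intro n
    induction n with
    | zero => rw [pow_zero, mul_one, hDvMv]
    | succ n ih =>
      have h1 := hkey n
      have h2 : f R ≤ f (Dx n) := hf_anti (Dx n) R (hDx0 n) (hDxR n)
      have h3 : (1 - s * f (Dx n)) * Dv n ≤ r * Dv n := by
        apply mul_le_mul_of_nonneg_right _ (hDv0 n)
        rw [hrdef]
        nlinarith
      have h4 : r * Dv n ≤ r * (Mv * r ^ n) := mul_le_mul_of_nonneg_left ih hr0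
      calc Dv (n+1) ≤ r * (Mv * r ^ n) := by linarith
        _ = Mv * r ^ (n+1) := by ring
  have hstepV : ∀ n i, ‖V (n+1) i - V n i‖ ≤ Dv n := by
    intro n i
    have he : V (n+1) i - V n i
        = ∑ j ∈ Finset.univ.erase i, f ‖X n i - X n j‖ • (V n j - V n i) := by
      rw [hV n i]; abel
    rw [he]
    calc ‖∑ j ∈ Finset.univ.erase i, f ‖X n i - X n j‖ • (V n j - V n i)‖
        ≤ ∑ j ∈ Finset.univ.erase i, ‖f ‖X n i - X n j‖ • (V n j - V n i)‖ :=
          norm_sum_le _ _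
      _ ≤ ∑ _j ∈ Finset.univ.erase i, 1 / s * Dv n := by
          refine Finset.sum_le_sum fun j _ => ?_
          rw [norm_smul, Real.norm_of_nonneg (hf_nonneg _ (norm_nonneg _))]
          exact mul_le_mul (hf_lt _ (norm_nonneg _)).le (hDvle n j i)
            (norm_nonneg _) (by positivity)
      _ ≤ Dv n := by
          rw [Finset.sum_const, Finset.card_erase_of_mem (Finset.mem_univ i),
            nsmul_eq_mul]
          have hc : ((s - 1 : ℕ) : ℝ) = (s : ℝ) - 1 := by
            simp [Nat.cast_sub hs]
          rw [Finset.card_univ, Fintype.card_fin, hc]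
          have : ((s : ℝ) - 1) * (1 / s) ≤ 1 := by
            rw [sub_mul]
            have : (s : ℝ) * (1 / s) = 1 := by field_simp
            rw [this]
            have : 0 ≤ 1 / (s : ℝ) := by positivity
            linarith
          nlinarith [hDv0 n]
  have hVd : ∀ i n, dist (V n i) (V (n+1) i) ≤ Mv * r ^ n := by
    intro i n
    rw [dist_eq_norm, norm_sub_rev]
    exact (hstepV n i).trans (hgeo n)
  have hlim : ∀ i, ∃ c, Tendsto (fun n => V n i) atTop (nhds c) := fun i =>
    cauchySeq_tendsto_of_complete (cauchySeq_of_le_geometric r Mv hr1 (hVd i))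
  choose c hc using hlim
  have hzero : ∀ i, Tendsto (fun n => V n i - V n i0) atTop (nhds 0) := by
    intro i
    apply squeeze_zero_norm (fun n => (hDvle n i i0).trans (hgeo n))
    have := (tendsto_pow_atTop_nhds_zero_of_lt_one hr0 hr1).const_mul Mv
    simpa using this
  refine ⟨⟨c i0, fun i => ?_⟩, ⟨R, hR0, fun n i j => (hDxle n i j).trans (hDxR n)⟩⟩
  have h1 : c i - c i0 = 0 := tendsto_nhds_unique ((hc i).sub (hc i0)) (hzero i)
  have h2 : c i = c i0 := by rwa [sub_eq_zero] at h1
  rw [← h2]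
  exact hc i
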